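/- For n ≥ 3 and m ≥ 2, no 2-element set of vertices is a resolving set for the graph (Pₙ × Pₘ) ⊙ K₁; hence dim((Pₙ × Pₘ) ⊙ K₁) ≥ 3. -/

import Mathlib

open SimpleGraph

/-- Corona `G ⊙ K₁`: attach to each vertex `v` (as `Sum.inl v`) a pendant vertex `Sum.inr v`. -/
def corona {V : Type*} (G : SimpleGraph V) : SimpleGraph (V ⊕ V) :=
  SimpleGraph.fromRel (fun a b =>
    match a, b with
    | Sum.inl x, Sum.inl y => G.Adj x y
    | Sum.inl x, Sum.inr y => x = y
    | _, _ => False)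

/-- `S` is a resolving set for `G`: distinct vertices have distinct distance vectors to `S`. -/
def IsResolving {V : Type*} (G : SimpleGraph V) (S : Set V) : Prop :=
  ∀ u v : V, (∀ s ∈ S, G.dist u s = G.dist v s) → u = v

/-- Metric dimension: minimum cardinality of a resolving set. -/
noncomputable def metricDim {V : Type*} [Fintype V] (G : SimpleGraph V) : ℕ :=
  sInf {k | ∃ S : Finset V, S.card = k ∧ IsResolving G (↑S : Set V)}


/-- natural-number distance, omega-friendly. -/
def nd (a b : ℕ) : ℕ := (a - b) + (b - a)

section PathDist

lemma pathGraph_exists_walk (n : ℕ) :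
    ∀ (k : ℕ) (u v : Fin n), u.val + k = v.val →
      ∃ w : (pathGraph n).Walk u v, w.length = k := by
  intro k
  induction k with
  | zero =>
    intro u v h
    have : u = v := Fin.ext (by omega)
    subst this
    exact ⟨.nil, rfl⟩
  | succ k ih =>
    intro u v h
    have hlt : u.val + 1 < n := by have := v.isLt; omega
    set u' : Fin n := ⟨u.val + 1, hlt⟩ with hu'
    have hadj : (pathGraph n).Adj u u' := pathGraph_adj.mpr (Or.inl rfl)
    obtain ⟨w, hw⟩ := ih u' v (by simp [hu']; omega)
    exact ⟨.cons hadj w, by simp [hw]⟩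

lemma pathGraph_walk_le (n : ℕ) :
    ∀ (u v : Fin n) (w : (pathGraph n).Walk u v), nd u.val v.val ≤ w.length := by
  intro u v w
  induction w with
  | nil => simp [nd]
  | @cons a b c h p ih =>
    rw [pathGraph_adj] at h
    rw [SimpleGraph.Walk.length_cons]
    simp only [nd] at ih ⊢
    omega

lemma pathGraph_dist (n : ℕ) (u v : Fin n) :
    (pathGraph n).dist u v = nd u.val v.val := by
  apply le_antisymm
  · rcases le_total u.val v.val with h | h
    · obtain ⟨w, hw⟩ := pathGraph_exists_walk n (v.val - u.val) u v (by omega)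
      calc (pathGraph n).dist u v ≤ w.length := SimpleGraph.dist_le w
        _ = nd u.val v.val := by simp [hw, nd]; omega
    · obtain ⟨w, hw⟩ := pathGraph_exists_walk n (u.val - v.val) v u (by omega)
      calc (pathGraph n).dist u v ≤ w.reverse.length := SimpleGraph.dist_le w.reverse
        _ = nd u.val v.val := by simp [hw, nd]; omega
  · rcases (pathGraph_preconnected n u v) with ⟨w⟩
    obtain ⟨w, hw⟩ := SimpleGraph.Reachable.exists_walk_length_eq_dist ⟨w⟩
    rw [← hw]
    exact pathGraph_walk_le n u v w

end PathDist

section BoxDist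

variable {α β : Type*} {G : SimpleGraph α} {H : SimpleGraph β}

lemma boxProd_walk_le (hG : G.Connected) (hH : H.Connected) :
    ∀ (x y : α × β) (w : (G □ H).Walk x y),
      G.dist x.1 y.1 + H.dist x.2 y.2 ≤ w.length := by
  intro x y w
  induction w with
  | nil => simp
  | @cons a b c h p ih =>
    rw [SimpleGraph.Walk.length_cons]
    rw [SimpleGraph.boxProd_adj] at h
    rcases h with ⟨h1, h2⟩ | ⟨h1, h2⟩
    · have t := hG.dist_triangle (u := a.1) (v := b.1) (w := c.1)
      have : G.dist a.1 b.1 = 1 := SimpleGraph.dist_eq_one_iff_adj.mpr h1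
      rw [h2]
      omega
    · have t := hH.dist_triangle (u := a.2) (v := b.2) (w := c.2)
      have : H.dist a.2 b.2 = 1 := SimpleGraph.dist_eq_one_iff_adj.mpr h1
      rw [h2]
      omega

lemma boxProd_dist (hG : G.Connected) (hH : H.Connected) (x y : α × β) :
    (G □ H).dist x y = G.dist x.1 y.1 + H.dist x.2 y.2 := by
  apply le_antisymm
  · obtain ⟨w1, hw1⟩ := hG.exists_walk_length_eq_dist x.1 y.1
    obtain ⟨w2, hw2⟩ := hH.exists_walk_length_eq_dist x.2 y.2
    have : (G □ H).dist x y ≤ ((w1.boxProdLeft H x.2).append (w2.boxProdRight G y.1)).length :=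
      SimpleGraph.dist_le _
    have e1 : (w1.boxProdLeft H x.2).length = w1.length := SimpleGraph.Walk.length_map _ _
    have e2 : (w2.boxProdRight G y.1).length = w2.length := SimpleGraph.Walk.length_map _ _
    rwa [SimpleGraph.Walk.length_append, e1, e2, hw1, hw2] at this
  · have hc : (G □ H).Connected := hG.boxProd hH
    obtain ⟨w, hw⟩ := hc.exists_walk_length_eq_dist x y
    rw [← hw]
    exact boxProd_walk_le hG hH x y w

end BoxDist

section Corona

variable {V : Type*} {G : SimpleGraph V}

lemma corona_adj_inl_inl {x y : V} : (corona G).Adj (Sum.inl x) (Sum.inl y) ↔ G.Adj x y := by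
  simp only [corona, SimpleGraph.fromRel_adj]
  constructor
  · rintro ⟨-, h | h⟩
    · exact h
    · exact h.symm
  · intro h
    exact ⟨by simp [h.ne], Or.inl h⟩

lemma corona_adj_inl_inr {x y : V} : (corona G).Adj (Sum.inl x) (Sum.inr y) ↔ x = y := by
  simp only [corona, SimpleGraph.fromRel_adj]
  constructor
  · rintro ⟨-, h | h⟩
    · exact h
    · exact h.elim
  · rintro rfl
    exact ⟨by simp, Or.inl rfl⟩

lemma corona_adj_inr_inl {x y : V} : (corona G).Adj (Sum.inr x) (Sum.inl y) ↔ y = x :=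
  ⟨fun h => corona_adj_inl_inr.mp h.symm, fun h => (corona_adj_inl_inr.mpr h).symm⟩

lemma corona_adj_inr_inr {x y : V} : ¬ (corona G).Adj (Sum.inr x) (Sum.inr y) := by
  simp only [corona, SimpleGraph.fromRel_adj]
  rintro ⟨-, h | h⟩ <;> exact h

/-- inclusion of the base graph into the corona -/
def coronaHom (G : SimpleGraph V) : G →g corona G where
  toFun := Sum.inl
  map_rel' := fun h => corona_adj_inl_inl.mpr h

/-- the base projection -/
def pr : V ⊕ V → V := Sum.elim id id

lemma corona_connected (hG : G.Connected) : (corona G).Connected := by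
  haveI := hG.nonempty
  refine ⟨fun a b => ?_⟩
  have key : ∀ c : V ⊕ V, (corona G).Reachable c (Sum.inl (pr c)) := by
    rintro (x | x)
    · exact Reachable.refl _
    · exact (corona_adj_inr_inl.mpr rfl).reachable
  have base : (corona G).Reachable (Sum.inl (pr a)) (Sum.inl (pr b)) :=
    (hG.preconnected (pr a) (pr b)).map (coronaHom G)
  exact ((key a).trans base).trans (key b).symm

lemma corona_walk_le (hG : G.Connected) :
    ∀ (a b : V ⊕ V) (w : (corona G).Walk a b), G.dist (pr a) (pr b) ≤ w.length := by
  intro a b w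
  induction w with
  | nil => simp
  | @cons a c b h p ih =>
    rw [SimpleGraph.Walk.length_cons]
    match a, c with
    | Sum.inl x, Sum.inl y =>
      rw [corona_adj_inl_inl] at h
      have t := hG.dist_triangle (u := x) (v := y) (w := pr b)
      have h1 : G.dist x y = 1 := SimpleGraph.dist_eq_one_iff_adj.mpr h
      simp only [pr, Sum.elim_inl, id_eq] at *
      omega
    | Sum.inl x, Sum.inr y =>
      rw [corona_adj_inl_inr] at h
      subst h
      simp only [pr, Sum.elim_inl, Sum.elim_inr, id_eq] at *
      omega
    | Sum.inr x, Sum.inl y =>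
      rw [corona_adj_inr_inl] at h
      subst h
      simp only [pr, Sum.elim_inl, Sum.elim_inr, id_eq] at *
      omega
    | Sum.inr x, Sum.inr y =>
      exact absurd h corona_adj_inr_inr

lemma corona_dist_inl_inl (hG : G.Connected) (x y : V) :
    (corona G).dist (Sum.inl x) (Sum.inl y) = G.dist x y := by
  apply le_antisymm
  · obtain ⟨w, hw⟩ := hG.exists_walk_length_eq_dist x y
    calc (corona G).dist (Sum.inl x) (Sum.inl y) ≤ (w.map (coronaHom G)).length :=
          SimpleGraph.dist_le _
      _ = G.dist x y := by rw [SimpleGraph.Walk.length_map, hw]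
  · obtain ⟨w, hw⟩ := (corona_connected hG).exists_walk_length_eq_dist (Sum.inl x) (Sum.inl y)
    rw [← hw]
    exact corona_walk_le hG _ _ w

lemma corona_dist_inr (hG : G.Connected) (x : V) (s : V ⊕ V) (hs : s ≠ Sum.inr x) :
    (corona G).dist (Sum.inr x) s = (corona G).dist (Sum.inl x) s + 1 := by
  have hc := corona_connected hG
  apply le_antisymm
  · have t := hc.dist_triangle (u := Sum.inr x) (v := Sum.inl x) (w := s)
    have h1 : (corona G).dist (Sum.inr x) (Sum.inl x) = 1 :=
      SimpleGraph.dist_eq_one_iff_adj.mpr (corona_adj_inr_inl.mpr rfl)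
    omega
  · obtain ⟨w, hw⟩ := hc.exists_walk_length_eq_dist (Sum.inr x) s
    cases w with
    | nil => exact absurd rfl hs
    | @cons a c b h p =>
      have hcx : c = Sum.inl x := by
        match c with
        | Sum.inl y => rw [corona_adj_inr_inl] at h; rw [h]
        | Sum.inr y => exact absurd h corona_adj_inr_inr
      subst hcx
      have : (corona G).dist (Sum.inl x) s ≤ p.length := SimpleGraph.dist_le p
      rw [SimpleGraph.Walk.length_cons] at hw
      omega

/-- landmark offset -/
def off {V : Type*} : V ⊕ V → ℕ := Sum.elim (fun _ => 0) (fun _ => 1)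

lemma corona_dist_inl_landmark (hG : G.Connected) (w : V) (s : V ⊕ V) :
    (corona G).dist (Sum.inl w) s = G.dist w (pr s) + off s := by
  match s with
  | Sum.inl a => simp [off, pr, corona_dist_inl_inl hG]
  | Sum.inr a =>
    rw [SimpleGraph.dist_comm, corona_dist_inr hG a (Sum.inl w) (by simp),
      corona_dist_inl_inl hG, SimpleGraph.dist_comm]
    simp [off, pr]

lemma corona_dist_inr_landmark (hG : G.Connected) (u : V) (s : V ⊕ V) (hs : s ≠ Sum.inr u) :
    (corona G).dist (Sum.inr u) s = G.dist u (pr s) + off s + 1 := by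
  rw [corona_dist_inr hG u s hs, corona_dist_inl_landmark hG]

end Corona

/-- corner case: q₁ = 0, q₂ = m-1, p₁ ≠ p₂ -/
lemma keyCorner (n m p₁ p₂ : ℕ) (hn : 3 ≤ n) (hm : 2 ≤ m)
    (hp₁ : p₁ < n) (hp₂ : p₂ < n) (hne : p₁ ≠ p₂) :
    ∃ x y x' y', (x < n ∧ y < m ∧ x' < n ∧ y' < m) ∧
      ((¬(x = x' ∧ y = y') ∧
        nd x p₁ + nd y 0 = nd x' p₁ + nd y' 0 ∧
        nd x p₂ + nd y (m-1) = nd x' p₂ + nd y' (m-1)) ∨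
      (¬(x = p₁ ∧ y = 0) ∧ ¬(x = p₂ ∧ y = m-1) ∧
        nd x' p₁ + nd y' 0 = nd x p₁ + nd y 0 + 1 ∧
        nd x' p₂ + nd y' (m-1) = nd x p₂ + nd y (m-1) + 1)) := by
  by_cases hx : p₁ ≤ n-2 ∧ p₂ ≤ n-2
  · obtain ⟨y, hy1, hy2, hy3⟩ : ∃ y, y < m ∧ ¬(n-2 = p₁ ∧ y = 0) ∧ ¬(n-2 = p₂ ∧ y = m-1) := by
      by_cases h : p₁ = n-2
      · exact ⟨m-1, by omega, by omega, by omega⟩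
      · exact ⟨0, by omega, by omega, by omega⟩
    exact ⟨n-2, y, n-1, y, ⟨by omega, by omega, by omega, by omega⟩,
      Or.inr ⟨by omega, by omega, by simp only [nd]; omega, by simp only [nd]; omega⟩⟩
  · by_cases hx' : 1 ≤ p₁ ∧ 1 ≤ p₂
    · obtain ⟨y, hy1, hy2, hy3⟩ : ∃ y, y < m ∧ ¬(1 = p₁ ∧ y = 0) ∧ ¬(1 = p₂ ∧ y = m-1) := by
        by_cases h : p₁ = 1
        · exact ⟨m-1, by omega, by omega, by omega⟩
        · exact ⟨0, by omega, by omega, by omega⟩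
      exact ⟨1, y, 0, y, ⟨by omega, by omega, by omega, by omega⟩,
        Or.inr ⟨by omega, by omega, by simp only [nd]; omega, by simp only [nd]; omega⟩⟩
    · have hA : p₁ = n-1 ∨ p₂ = n-1 := by
        rcases not_and_or.mp hx with h | h <;> [left; right] <;> omega
      have hB : p₁ = 0 ∨ p₂ = 0 := by
        rcases not_and_or.mp hx' with h | h <;> [left; right] <;> omega
      rcases hA with hA | hA <;> rcases hB with hB | hB
      · omega
      · -- p₁ = n-1, p₂ = 0 : corners (n-1,0), (0,m-1) : type II
        exact ⟨0, 0, 1, 1, ⟨by omega, by omega, by omega, by omega⟩,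
          Or.inl ⟨by omega, by simp only [nd]; omega, by simp only [nd]; omega⟩⟩
      · -- p₁ = 0, p₂ = n-1 : corners (0,0), (n-1,m-1) : type I
        exact ⟨1, 0, 0, 1, ⟨by omega, by omega, by omega, by omega⟩,
          Or.inl ⟨by omega, by simp only [nd]; omega, by simp only [nd]; omega⟩⟩
      · omega

lemma keyNat (n m p₁ q₁ p₂ q₂ : ℕ) (hn : 3 ≤ n) (hm : 2 ≤ m)
    (hp₁ : p₁ < n) (hq₁ : q₁ < m) (hp₂ : p₂ < n) (hq₂ : q₂ < m) :
    ∃ x y x' y', (x < n ∧ y < m ∧ x' < n ∧ y' < m) ∧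
      ((¬(x = x' ∧ y = y') ∧
        nd x p₁ + nd y q₁ = nd x' p₁ + nd y' q₁ ∧
        nd x p₂ + nd y q₂ = nd x' p₂ + nd y' q₂) ∨
      (¬(x = p₁ ∧ y = q₁) ∧ ¬(x = p₂ ∧ y = q₂) ∧
        nd x' p₁ + nd y' q₁ = nd x p₁ + nd y q₁ + 1 ∧
        nd x' p₂ + nd y' q₂ = nd x p₂ + nd y q₂ + 1)) := by
  by_cases hpp : p₁ = p₂
  · subst hpp
    by_cases h1 : 1 ≤ p₁ ∧ p₁ ≤ n-2
    · -- reflection in x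
      exact ⟨p₁-1, 0, p₁+1, 0, ⟨by omega, by omega, by omega, by omega⟩,
        Or.inl ⟨by omega, by simp only [nd]; omega, by simp only [nd]; omega⟩⟩
    · by_cases h2 : p₁ = 0
      · -- shift +x
        exact ⟨n-2, 0, n-1, 0, ⟨by omega, by omega, by omega, by omega⟩,
          Or.inr ⟨by omega, by omega, by simp only [nd]; omega, by simp only [nd]; omega⟩⟩
      · -- p₁ = n-1, shift -x
        exact ⟨1, 0, 0, 0, ⟨by omega, by omega, by omega, by omega⟩,
          Or.inr ⟨by omega, by omega, by simp only [nd]; omega, by simp only [nd]; omega⟩⟩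
  · obtain ⟨x, hx1, hx2, hx3⟩ : ∃ x, x < n ∧ x ≠ p₁ ∧ x ≠ p₂ := by
      by_cases h0 : p₁ = 0 ∨ p₂ = 0
      · by_cases h1 : p₁ = 1 ∨ p₂ = 1
        · rcases h0 with h0 | h0 <;> rcases h1 with h1 | h1 <;>
            exact ⟨2, by omega, by omega, by omega⟩
        · exact ⟨1, by omega, by omega, by omega⟩
      · exact ⟨0, by omega, by omega, by omega⟩
    by_cases hq : q₁ ≤ m-2 ∧ q₂ ≤ m-2
    · -- shift +y
      exact ⟨x, m-2, x, m-1, ⟨by omega, by omega, by omega, by omega⟩,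
        Or.inr ⟨by omega, by omega, by simp only [nd]; omega, by simp only [nd]; omega⟩⟩
    · by_cases hq' : 1 ≤ q₁ ∧ 1 ≤ q₂
      · -- shift -y
        exact ⟨x, 1, x, 0, ⟨by omega, by omega, by omega, by omega⟩,
          Or.inr ⟨by omega, by omega, by simp only [nd]; omega, by simp only [nd]; omega⟩⟩
      · have hA : q₁ = m-1 ∨ q₂ = m-1 := by
          rcases not_and_or.mp hq with h | h <;> [left; right] <;> omega
        have hB : q₁ = 0 ∨ q₂ = 0 := by
          rcases not_and_or.mp hq' with h | h <;> [left; right] <;> omega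
        rcases hA with hA | hA <;> rcases hB with hB | hB
        · omega
        · -- q₁ = m-1, q₂ = 0: apply keyCorner with indices swapped
          obtain ⟨x, y, x', y', hb, hc⟩ := keyCorner n m p₂ p₁ hn hm hp₂ hp₁ (Ne.symm hpp)
          subst hA; subst hB
          refine ⟨x, y, x', y', hb, ?_⟩
          rcases hc with ⟨h1, h2, h3⟩ | ⟨h1, h2, h3, h4⟩
          · exact Or.inl ⟨h1, h3, h2⟩
          · exact Or.inr ⟨h2, h1, h4, h3⟩
        · -- q₁ = 0, q₂ = m-1
          obtain ⟨x, y, x', y', hb, hc⟩ := keyCorner n m p₁ p₂ hn hm hp₁ hp₂ hpp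
          subst hA; subst hB
          exact ⟨x, y, x', y', hb, hc⟩
        · omega

section Main

variable (n m : ℕ)

lemma pathConn (h : 1 ≤ n) : (pathGraph n).Connected := by
  obtain ⟨k, rfl⟩ : ∃ k, n = k + 1 := ⟨n - 1, by omega⟩
  exact pathGraph_connected k

lemma gridConn (hn : 1 ≤ n) (hm : 1 ≤ m) : (pathGraph n □ pathGraph m).Connected :=
  (pathConn n hn).boxProd (pathConn m hm)

lemma gridDist (hn : 1 ≤ n) (hm : 1 ≤ m) (u v : Fin n × Fin m) :
    (pathGraph n □ pathGraph m).dist u v = nd u.1.val v.1.val + nd u.2.val v.2.val := by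
  rw [boxProd_dist (pathConn n hn) (pathConn m hm), pathGraph_dist, pathGraph_dist]

theorem stmt_3 (n m : ℕ) (hn : 3 ≤ n) (hm : 2 ≤ m) :
    (∀ S : Finset ((Fin n × Fin m) ⊕ (Fin n × Fin m)), S.card = 2 →
      ¬ IsResolving (corona (pathGraph n □ pathGraph m)) (↑S)) ∧
    3 ≤ metricDim (corona (pathGraph n □ pathGraph m)) := by
  have hn1 : 1 ≤ n := by omega
  have hm1 : 1 ≤ m := by omega
  set GG := pathGraph n □ pathGraph m with hGGdef
  have hGG : GG.Connected := gridConn n m hn1 hm1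
  have hC : (corona GG).Connected := corona_connected hGG
  have part1 : ∀ S : Finset ((Fin n × Fin m) ⊕ (Fin n × Fin m)), S.card = 2 →
      ¬ IsResolving (corona GG) (↑S) := by
    intro S hcard hres
    obtain ⟨s₁, s₂, hs12, rfl⟩ := Finset.card_eq_two.mp hcard
    set a₁ := pr s₁ with ha₁
    set a₂ := pr s₂ with ha₂
    obtain ⟨x, y, x', y', ⟨hb1, hb2, hb3, hb4⟩, hcase⟩ :=
      keyNat n m a₁.1.val a₁.2.val a₂.1.val a₂.2.val hn hm a₁.1.isLt a₁.2.isLt a₂.1.isLt a₂.2.isLt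
    set u : Fin n × Fin m := (⟨x, hb1⟩, ⟨y, hb2⟩) with hu
    set v : Fin n × Fin m := (⟨x', hb3⟩, ⟨y', hb4⟩) with hv
    have hmem : ∀ s : (Fin n × Fin m) ⊕ (Fin n × Fin m),
        s ∈ (↑({s₁, s₂} : Finset _) : Set _) ↔ s = s₁ ∨ s = s₂ := by
      intro s; simp
    rcases hcase with ⟨h1, h2, h3⟩ | ⟨h1, h2, h3, h4⟩
    · -- equal case: inl u vs inl v
      have huv : u ≠ v := by
        intro h
        rw [Prod.ext_iff, Fin.ext_iff, Fin.ext_iff] at h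
        exact h1 ⟨h.1, h.2⟩
      have := hres (Sum.inl u) (Sum.inl v) ?_
      · exact huv (Sum.inl.inj this)
      · intro s hs
        rcases (hmem s).mp hs with rfl | rfl
        · rw [corona_dist_inl_landmark hGG, corona_dist_inl_landmark hGG,
            gridDist n m hn1 hm1, gridDist n m hn1 hm1]
          simp only [hu, hv, ← ha₁]
          omega
        · rw [corona_dist_inl_landmark hGG, corona_dist_inl_landmark hGG,
            gridDist n m hn1 hm1, gridDist n m hn1 hm1]
          simp only [hu, hv, ← ha₂]
          omega
    · -- shift case: inr u vs inl v
      have hua₁ : u ≠ a₁ := by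
        intro h
        rw [Prod.ext_iff, Fin.ext_iff, Fin.ext_iff] at h
        exact h1 ⟨h.1, h.2⟩
      have hua₂ : u ≠ a₂ := by
        intro h
        rw [Prod.ext_iff, Fin.ext_iff, Fin.ext_iff] at h
        exact h2 ⟨h.1, h.2⟩
      have hs₁ : s₁ ≠ Sum.inr u := by
        cases s₁ with
        | inl a => simp
        | inr a =>
          intro h
          exact hua₁ (by rw [ha₁, ← Sum.inr.inj h]; rfl)
      have hs₂ : s₂ ≠ Sum.inr u := by
        cases s₂ with
        | inl a => simp
        | inr a =>
          intro h
          exact hua₂ (by rw [ha₂, ← Sum.inr.inj h]; rfl)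
      have := hres (Sum.inr u) (Sum.inl v) ?_
      · exact Sum.inr_ne_inl this
      · intro s hs
        rcases (hmem s).mp hs with h' | h' <;> rw [h']
        · rw [corona_dist_inr_landmark hGG u s₁ hs₁, corona_dist_inl_landmark hGG,
            gridDist n m hn1 hm1, gridDist n m hn1 hm1]
          simp only [hu, hv, ← ha₁]
          omega
        · rw [corona_dist_inr_landmark hGG u s₂ hs₂, corona_dist_inl_landmark hGG,
            gridDist n m hn1 hm1, gridDist n m hn1 hm1]
          simp only [hu, hv, ← ha₂]
          omega
  refine ⟨part1, ?_⟩
  -- metric dimension part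
  have huniv : IsResolving (corona GG) (↑(Finset.univ : Finset ((Fin n × Fin m) ⊕ (Fin n × Fin m)))) := by
    intro u v h
    have h0 := h u (by simp)
    rw [SimpleGraph.dist_self] at h0
    exact ((hC.dist_eq_zero_iff).mp h0.symm).symm
  have hne : {k | ∃ S : Finset ((Fin n × Fin m) ⊕ (Fin n × Fin m)),
      S.card = k ∧ IsResolving (corona GG) (↑S : Set _)}.Nonempty :=
    ⟨_, Finset.univ, rfl, huniv⟩
  have hmemInf := Nat.sInf_mem hne
  obtain ⟨S, hScard, hSres⟩ := hmemInf
  rw [metricDim]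
  by_contra hlt
  push_neg at hlt
  have hk2 : S.card ≤ 2 := by omega
  have hcard2 : 2 ≤ (Finset.univ : Finset ((Fin n × Fin m) ⊕ (Fin n × Fin m))).card := by
    simp only [Finset.card_univ, Fintype.card_sum, Fintype.card_prod, Fintype.card_fin]
    have : 6 ≤ n * m := by
      calc 6 = 3 * 2 := rfl
      _ ≤ n * m := Nat.mul_le_mul hn hm
    omega
  obtain ⟨T, hST, -, hTcard⟩ :=
    Finset.exists_subsuperset_card_eq (Finset.subset_univ S) hk2 hcard2
  have hTres : IsResolving (corona GG) (↑T : Set _) := by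
    intro u v h
    exact hSres u v fun s hs => h s (hST hs)
  exact part1 T hTcard hTres

end Main
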